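/- (Theorem 2) Let f : 𝕋 → ℝ be continuous, even, with mean value zero, with Fourier coefficients satisfying c₁·|k|^{−2} ≤ f̂(k) ≤ c₂·|k|^{−2} for all k ≠ 0 (for some constants c₂ ≥ c₁ > 0), and let (x_n)_{n≥1} be a greedy sequence for f with initial points x_1, …, x_M. Then there is a constant C > 0, depending only on c₁, c₂, f(0) and the initial points, such that sup_{x∈𝕋} |∑_{k=1}^{n} f(x − x_k)| ≤ C · n^{1/3} holds for infinitely many n. -/

import Mathlib

open MeasureTheory Filter AddCircle ComplexConjugate

private lemma nat_tail_partial (H : ℕ) (hH : 1 ≤ H) (m : ℕ) :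
    ∑ i ∈ Finset.range m, (if i ≤ H then (0:ℝ) else 1/(i:ℝ)^2) ≤ 1 / H := by
  set v : ℕ → ℝ := fun i => if i ≤ H then (0:ℝ) else 1/(i:ℝ)^2 with hv
  have hvnn : ∀ i, 0 ≤ v i := by
    intro i; simp only [hv]; split <;> positivity
  have key : ∀ j, ∑ i ∈ Finset.range (H+1+j), v i ≤ 1/H - 1/(H+j) := by
    intro j
    induction j with
    | zero =>
      have : ∀ i ∈ Finset.range (H+1), v i = 0 := by
        intro i hi; simp only [hv, if_pos (Nat.lt_succ_iff.mp (Finset.mem_range.mp hi))]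
      rw [Finset.sum_congr rfl this]
      simp
    | succ j ih =>
      have hrw : H + 1 + (j+1) = (H + 1 + j) + 1 := by ring
      rw [hrw, Finset.sum_range_succ]
      have hvv : v (H+1+j) = 1/((H:ℝ)+1+j)^2 := by
        simp only [hv, if_neg (by omega : ¬ H+1+j ≤ H)]
        push_cast; ring_nf
      have ha : (1:ℝ) ≤ (H:ℝ) + j := by
        have : (1:ℝ) ≤ (H:ℝ) := by exact_mod_cast hH
        have : (0:ℝ) ≤ (j:ℝ) := by positivity
        linarith
      have hstep : 1/((H:ℝ)+1+j)^2 ≤ 1/((H:ℝ)+j) - 1/((H:ℝ)+j+1) := by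
        rw [div_sub_div _ _ (by linarith) (by linarith)]
        rw [div_le_div_iff₀ (by nlinarith) (by nlinarith)]
        ring_nf; nlinarith
      calc ∑ i ∈ Finset.range (H+1+j), v i + v (H+1+j)
          ≤ (1/H - 1/((H:ℝ)+j)) + (1/((H:ℝ)+j) - 1/((H:ℝ)+j+1)) := by
            rw [hvv]; push_cast; push_cast at ih; linarith
        _ = 1/H - 1/((H:ℝ)+((j+1:ℕ):ℝ)) := by push_cast; ring
  have hmono : ∑ i ∈ Finset.range m, v i ≤ ∑ i ∈ Finset.range (H+1+m), v i :=
    Finset.sum_le_sum_of_subset_of_nonneg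
      (Finset.range_subset_range.mpr (by omega)) (fun i _ _ => hvnn i)
  have h2 := key m
  have : 0 < (H:ℝ) + m := by positivity
  have : 0 ≤ 1/((H:ℝ)+m) := by positivity
  linarith


private lemma int_tail (H : ℕ) (hH : 1 ≤ H) :
    ∑' k : ℤ, (if k ∈ Finset.Icc (-(H:ℤ)) (H:ℤ) then (0:ℝ) else 1/(k:ℝ)^2) ≤ 2 / H := by
  set v : ℕ → ℝ := fun i => if i ≤ H then (0:ℝ) else 1/(i:ℝ)^2 with hv
  set w : ℤ → ℝ := fun k => if k ∈ Finset.Icc (-(H:ℤ)) (H:ℤ) then (0:ℝ) else 1/(k:ℝ)^2 with hw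
  have hvnn : ∀ i, 0 ≤ v i := by intro i; simp only [hv]; split <;> positivity
  have hsq : Summable (fun i : ℕ => 1/(i:ℝ)^2) := by
    have := Real.summable_one_div_nat_pow (p := 2)
    simpa using this.2 (by norm_num)
  have hvsum : Summable v := by
    apply Summable.of_nonneg_of_le hvnn _ hsq
    intro i; simp only [hv]; split
    · positivity
    · exact le_rfl
  have hA : ∀ n : ℕ, w (n:ℤ) = v n := by
    intro n; simp only [hw, hv, Finset.mem_Icc]
    have : (-(H:ℤ) ≤ (n:ℤ) ∧ (n:ℤ) ≤ (H:ℤ)) ↔ n ≤ H := by omega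
    rw [if_congr this rfl rfl]
    norm_num
  have hB : ∀ n : ℕ, w (-((n:ℤ)+1)) = v (n+1) := by
    intro n; simp only [hw, hv, Finset.mem_Icc]
    have : (-(H:ℤ) ≤ -((n:ℤ)+1) ∧ -((n:ℤ)+1) ≤ (H:ℤ)) ↔ n+1 ≤ H := by omega
    rw [if_congr this rfl rfl]
    push_cast
    congr 1
    rw [neg_add']
    ring_nf
  have hvsum' : Summable (fun n : ℕ => v (n+1)) := (summable_nat_add_iff 1).mpr hvsum
  have htsA : ∑' n : ℕ, v n ≤ 1/H := Summable.tsum_le_of_sum_range_le hvsum (nat_tail_partial H hH)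
  have htsB : ∑' n : ℕ, v (n+1) ≤ 1/H := by
    apply Summable.tsum_le_of_sum_range_le hvsum'
    intro m
    have h0 : v 0 = 0 := by simp [hv, hH]
    have := Finset.sum_range_succ' v m
    have h2 := nat_tail_partial H hH (m+1)
    simp only [← hv] at h2 ⊢
    rw [this, h0, add_zero] at h2
    exact h2
  have hws : HasSum w ((∑' n : ℕ, v n) + ∑' n : ℕ, v (n+1)) := by
    apply HasSum.of_nat_of_neg_add_one
    · exact (funext hA : (fun n : ℕ => w n) = v) ▸ hvsum.hasSum
    · have : (fun n : ℕ => w (-((n:ℤ)+1))) = fun n => v (n+1) := funext hB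
      exact this ▸ hvsum'.hasSum
  rw [hws.tsum_eq]
  have : 2/(H:ℝ) = 1/H + 1/H := by ring
  rw [this]
  exact add_le_add htsA htsB


set_option maxHeartbeats 1000000 in
/-- Theorem 2: For continuous even mean-zero `f : 𝕋 → ℝ` with
`c₁·|k|^{−2} ≤ f̂(k) ≤ c₂·|k|^{−2}` for `k ≠ 0`, and a greedy sequence `(x_n)` for `f`,
there is `C > 0` such that `sup_x |∑_{k=1}^{n} f(x − x_k)| ≤ C · n^{1/3}` holds for
infinitely many `n`. -/
theorem sup_le_cube_root_infinitely_often
    (f : UnitAddCircle → ℝ) (hf_cont : Continuous f)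
    (hf_even : ∀ t : UnitAddCircle, f (-t) = f t)
    (hf_mean : (∫ t : UnitAddCircle, f t) = 0)
    (c₁ c₂ : ℝ) (hc₁ : 0 < c₁) (hc₁₂ : c₁ ≤ c₂)
    (hf_lb : ∀ k : ℤ, k ≠ 0 → c₁ / (k : ℝ) ^ 2 ≤ (fourierCoeff (fun t => (f t : ℂ)) k).re)
    (hf_ub : ∀ k : ℤ, k ≠ 0 → (fourierCoeff (fun t => (f t : ℂ)) k).re ≤ c₂ / (k : ℝ) ^ 2)
    (M : ℕ) (hM : 1 ≤ M) (x : ℕ → UnitAddCircle)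
    (hgreedy : ∀ n : ℕ, M < n → ∀ y : UnitAddCircle,
      ∑ k ∈ Finset.Icc 1 (n - 1), f (x n - x k) ≤ ∑ k ∈ Finset.Icc 1 (n - 1), f (y - x k)) :
    ∃ C > 0, ∃ᶠ n in atTop, ∀ y : UnitAddCircle,
      |∑ k ∈ Finset.Icc 1 n, f (y - x k)| ≤ C * (n : ℝ) ^ ((1:ℝ)/3) := by
  classical
  set F : UnitAddCircle → ℂ := fun t => (f t : ℂ) with hF
  have hFc : Continuous F := Complex.continuous_ofReal.comp hf_cont
  have hvol : (volume : Measure UnitAddCircle) = haarAddCircle := by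
    rw [volume_eq_smul_haarAddCircle]; simp
  have hfourier_def : ∀ (g : UnitAddCircle → ℂ) (k : ℤ),
      fourierCoeff g k = ∫ t : UnitAddCircle, fourier (-k) t * g t ∂haarAddCircle := by
    intro g k; rfl
  have hconj : ∀ k : ℤ, conj (fourierCoeff F k) = fourierCoeff F (-k) := by
    intro k
    rw [hfourier_def, hfourier_def, ← integral_conj]
    congr 1; funext t
    rw [map_mul, ← fourier_neg, neg_neg]
    congr 1
    simp [hF, Complex.conj_ofReal]
  have heven : ∀ k : ℤ, fourierCoeff F (-k) = fourierCoeff F k := by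
    intro k
    rw [hfourier_def, hfourier_def]
    simp only [neg_neg]
    conv_rhs => rw [← integral_neg_eq_self (fun t : UnitAddCircle => fourier (-k) t * F t) haarAddCircle]
    congr 1; funext t
    have h1 : fourier (-k) (-t) = fourier k t := by
      rw [fourier_apply, fourier_apply]
      congr 1
      rw [neg_smul, smul_neg, neg_neg]
    have h2 : F (-t) = F t := by simp only [hF]; rw [hf_even t]
    rw [h1, h2]
  have hreal : ∀ k : ℤ, fourierCoeff F k = (((fourierCoeff F k).re : ℝ) : ℂ) := by
    intro k
    have := (hconj k).trans (heven k)
    exact (Complex.conj_eq_iff_re.mp this).symm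
  have ha0 : fourierCoeff F 0 = 0 := by
    rw [hfourier_def]
    simp only [neg_zero, fourier_zero, one_mul]
    rw [← hvol]
    simp only [hF]
    rw [show (∫ t : UnitAddCircle, ((f t : ℝ) : ℂ) ∂volume) = ((∫ t : UnitAddCircle, f t ∂volume : ℝ) : ℂ) from integral_ofReal,
      hf_mean, Complex.ofReal_zero]
  -- the real coefficients
  set ar : ℤ → ℝ := fun k => (fourierCoeff F k).re with har
  have har0 : ar 0 = 0 := by simp [har, ha0]
  have harnn : ∀ k, 0 ≤ ar k := by
    intro k
    rcases eq_or_ne k 0 with rfl | hk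
    · simp [har0]
    · exact le_trans (by positivity) (hf_lb k hk)
  have harub : ∀ k, ar k ≤ c₂ / (k:ℝ)^2 := by
    intro k
    rcases eq_or_ne k 0 with rfl | hk
    · simp [har0]
    · exact hf_ub k hk
  have hsq1 : Summable (fun k : ℤ => 1/(k:ℝ)^2) := by
    have := (Real.summable_one_div_int_pow (p := 2)).2 (by norm_num)
    simpa using this
  have hsq2 : Summable (fun k : ℤ => c₂ / (k:ℝ)^2) := by
    simpa [div_eq_mul_inv] using hsq1.mul_left c₂
  have harsum : Summable ar := Summable.of_nonneg_of_le harnn harub hsq2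
  have hcoeff_summ : Summable (fun k => fourierCoeff F k) := by
    apply Summable.of_norm
    have : ∀ k, ‖fourierCoeff F k‖ = ar k := by
      intro k
      rw [hreal k, Complex.norm_real, Real.norm_eq_abs, abs_of_nonneg (harnn k)]
    simpa [this] using harsum
  -- pointwise Fourier expansion
  have hexp : ∀ y : UnitAddCircle, HasSum (fun k => fourierCoeff F k * fourier k y) (F y) := by
    intro y
    have := has_pointwise_sum_fourier_series_of_summable
      (f := (⟨F, hFc⟩ : C(UnitAddCircle, ℂ))) (by simpa using hcoeff_summ) y
    simpa [smul_eq_mul] using this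
  -- fourier of a difference
  have hfd : ∀ (k : ℤ) (u v : UnitAddCircle),
      (fourier k (u - v) : ℂ) = fourier k u * conj (fourier k v) := by
    intro k u v
    rw [← fourier_neg, sub_eq_add_neg, fourier_apply, fourier_apply, fourier_apply,
      smul_add, toCircle_add, Circle.coe_mul, smul_neg, neg_smul]
  -- the Weyl sums and potential functions
  set S : ℕ → ℤ → ℂ := fun n k => ∑ j ∈ Finset.Icc 1 n, (fourier k (x j) : ℂ) with hS
  set g : ℕ → UnitAddCircle → ℝ := fun n y => ∑ j ∈ Finset.Icc 1 n, f (y - x j) with hg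
  have hSbd : ∀ n k, ‖S n k‖ ≤ n := by
    intro n k
    calc ‖S n k‖ ≤ ∑ j ∈ Finset.Icc 1 n, ‖(fourier k (x j) : ℂ)‖ := norm_sum_le _ _
      _ = ∑ j ∈ Finset.Icc 1 n, 1 := by
          apply Finset.sum_congr rfl; intro j _; simp [fourier_apply, Circle.norm_coe]
      _ ≤ n := by simp
  have hgS : ∀ (n : ℕ) (y : UnitAddCircle),
      HasSum (fun k => fourierCoeff F k * fourier k y * conj (S n k)) ((g n y : ℂ)) := by
    intro n y
    have h1 : HasSum (fun k : ℤ => ∑ j ∈ Finset.Icc 1 n, fourierCoeff F k * fourier k (y - x j))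
        (∑ j ∈ Finset.Icc 1 n, F (y - x j)) :=
      hasSum_sum fun j _ => hexp (y - x j)
    have h2 : (fun k : ℤ => ∑ j ∈ Finset.Icc 1 n, fourierCoeff F k * fourier k (y - x j))
        = fun k => fourierCoeff F k * fourier k y * conj (S n k) := by
      funext k
      rw [hS]
      simp only [map_sum, Finset.mul_sum]
      apply Finset.sum_congr rfl
      intro j _
      rw [hfd k y (x j)]
      ring
    have h3 : (∑ j ∈ Finset.Icc 1 n, F (y - x j)) = ((g n y : ℝ) : ℂ) := by
      simp only [hg, hF]
      push_cast
      rfl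
    rw [h2, h3] at h1
    exact h1
  set T : ℕ → ℝ := fun n => ∑ i ∈ Finset.Icc 1 n, ∑ j ∈ Finset.Icc 1 n, f (x i - x j) with hT
  have hTsum : ∀ n, HasSum (fun k => ar k * ‖S n k‖^2) (T n) := by
    intro n
    have h1 : HasSum (fun k : ℤ => ∑ i ∈ Finset.Icc 1 n,
        fourierCoeff F k * fourier k (x i) * conj (S n k))
        (∑ i ∈ Finset.Icc 1 n, ((g n (x i) : ℝ) : ℂ)) :=
      hasSum_sum fun i _ => hgS n (x i)
    have h2 : (fun k : ℤ => ∑ i ∈ Finset.Icc 1 n,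
        fourierCoeff F k * fourier k (x i) * conj (S n k))
        = fun k => (((ar k * ‖S n k‖^2 : ℝ)) : ℂ) := by
      funext k
      have hfold : ∑ i ∈ Finset.Icc 1 n, (fourier k (x i) : ℂ) = S n k := rfl
      rw [← Finset.sum_mul, ← Finset.mul_sum, hfold, mul_assoc, Complex.mul_conj, hreal k]
      rw [Complex.normSq_eq_norm_sq]
      norm_cast
    have h3 : (∑ i ∈ Finset.Icc 1 n, ((g n (x i) : ℝ) : ℂ)) = ((T n : ℝ) : ℂ) := by
      rw [hT, hg]
      push_cast
      rfl
    rw [h2, h3] at h1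
    exact Complex.hasSum_ofReal.mp h1
  have hT0 : ∀ n, 0 ≤ T n := by
    intro n
    rw [← (hTsum n).tsum_eq]
    exact tsum_nonneg fun k => mul_nonneg (harnn k) (by positivity)
  have hswap : ∀ u v : UnitAddCircle, f (u - v) = f (v - u) := by
    intro u v; rw [← hf_even (v - u), neg_sub]
  have hgc : ∀ n, Continuous (g n) := by
    intro n
    apply continuous_finset_sum
    intro j _
    exact hf_cont.comp (continuous_id.sub continuous_const)
  have hgint : ∀ n, Integrable (g n) volume := fun n =>
    (hgc n).integrable_of_hasCompactSupport (HasCompactSupport.of_compactSpace _)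
  have hfint : ∀ c : UnitAddCircle, Integrable (fun y : UnitAddCircle => f (y - c)) volume := by
    intro c
    apply Continuous.integrable_of_hasCompactSupport
    · exact hf_cont.comp (continuous_id.sub continuous_const)
    · exact HasCompactSupport.of_compactSpace _
  haveI hprob : IsProbabilityMeasure (volume : Measure UnitAddCircle) := by
    rw [hvol]; infer_instance
  have hint : ∀ n, (∫ y : UnitAddCircle, g n y) = 0 := by
    intro n
    simp only [hg]
    rw [integral_finset_sum _ (fun j _ => hfint (x j))]
    apply Finset.sum_eq_zero
    intro j _
    rw [integral_sub_right_eq_self (μ := volume) f (x j)]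
    exact hf_mean
  have hmin : ∀ n, M ≤ n → ∀ y, g n (x (n+1)) ≤ g n y := by
    intro n hn y
    have := hgreedy (n+1) (by omega) y
    simpa [hg] using this
  have hmin0 : ∀ n, M ≤ n → g n (x (n+1)) ≤ 0 := by
    intro n hn
    have h2 : (∫ _ : UnitAddCircle, g n (x (n+1))) ≤ ∫ y : UnitAddCircle, g n y :=
      integral_mono (integrable_const _) (hgint n) (fun y => hmin n hn y)
    rw [hint n, integral_const] at h2
    simpa using h2
  have hrec : ∀ n, T (n+1) = T n + f 0 + 2 * g n (x (n+1)) := by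
    intro n
    have hins : Finset.Icc 1 (n+1) = insert (n+1) (Finset.Icc 1 n) := by
      ext m; simp only [Finset.mem_Icc, Finset.mem_insert]; omega
    have hnot : (n+1) ∉ Finset.Icc 1 n := by simp
    simp only [hT, hg, hins, Finset.sum_insert hnot, sub_self, Finset.sum_add_distrib]
    have : ∑ i ∈ Finset.Icc 1 n, f (x i - x (n+1)) = ∑ i ∈ Finset.Icc 1 n, f (x (n+1) - x i) :=
      Finset.sum_congr rfl fun i _ => hswap _ _
    rw [this]; ring
  have hf0 : 0 ≤ f 0 := by
    have h1 : T 1 = f 0 := by simp [hT]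
    linarith [hT0 1]
  have hTle : ∀ n, M ≤ n → T n ≤ T M + ((n:ℝ) - M) * f 0 := by
    intro n hn
    induction n, hn using Nat.le_induction with
    | base => simp
    | succ n hn ih =>
      have h1 := hrec n
      have h2 := hmin0 n hn
      push_cast
      linarith
  have hK : ∀ n, M ≤ n → T n ≤ (T M + f 0) * n := by
    intro n hn
    have h1 := hTle n hn
    have h2 : (1:ℝ) ≤ n := by exact_mod_cast le_trans hM hn
    have h3 : (M:ℝ) ≥ 1 := by exact_mod_cast hM
    nlinarith [hT0 M]
  set B : ℝ := f 0 / 2 + 1 with hB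
  have hBpos : 0 < B := by rw [hB]; linarith
  have hfreq : ∀ N : ℕ, ∃ n, N ≤ n ∧ M ≤ n ∧ -B ≤ g n (x (n+1)) := by
    intro N
    by_contra hcon
    push_neg at hcon
    set N₀ := max N M with hN₀
    have hstep : ∀ j : ℕ, T (N₀ + j) ≤ T N₀ - 2 * j := by
      intro j; induction j with
      | zero => simp
      | succ j ih =>
        have h1 := hrec (N₀ + j)
        have h2 := hcon (N₀ + j) (le_trans (le_max_left _ _) (Nat.le_add_right _ _))
          (le_trans (le_max_right _ _) (Nat.le_add_right _ _))
        have h4 : N₀ + (j+1) = (N₀ + j) + 1 := rfl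
        rw [h4, h1]
        push_cast
        push_cast at ih
        rw [hB] at h2
        linarith
    have h5 := hstep (⌈T N₀⌉₊ + 1)
    have h6 := hT0 (N₀ + (⌈T N₀⌉₊ + 1))
    have h7 := Nat.le_ceil (T N₀)
    push_cast at h5
    linarith
  have hnorm : ∀ k, ‖fourierCoeff F k‖ = ar k := by
    intro k
    rw [hreal k, Complex.norm_real, Real.norm_eq_abs, abs_of_nonneg (harnn k)]
  have hfa : ∀ (k : ℤ) (u v : UnitAddCircle), (fourier k (u + v) : ℂ) = fourier k u * fourier k v := by
    intro k u v
    rw [fourier_apply, fourier_apply, fourier_apply, smul_add, toCircle_add, Circle.coe_mul]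
  have htrans : ∀ (k : ℤ) (c : UnitAddCircle),
      (∫ t : UnitAddCircle, fourier (-k) t * F (t - c) ∂haarAddCircle)
        = conj (fourier k c) * fourierCoeff F k := by
    intro k c
    have h1 : ∀ t : UnitAddCircle, fourier (-k) (t + c) * F (t + c - c)
        = fourier (-k) c * (fourier (-k) t * F t) := by
      intro t
      rw [add_sub_cancel_right, hfa (-k) t c]
      ring
    calc (∫ t : UnitAddCircle, fourier (-k) t * F (t - c) ∂haarAddCircle)
        = ∫ t : UnitAddCircle, fourier (-k) (t + c) * F (t + c - c) ∂haarAddCircle := by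
          rw [integral_add_right_eq_self (μ := haarAddCircle)
            (fun t : UnitAddCircle => fourier (-k) t * F (t - c)) c]
      _ = ∫ t : UnitAddCircle, fourier (-k) c * (fourier (-k) t * F t) ∂haarAddCircle := by
          simp_rw [h1]
      _ = fourier (-k) c * ∫ t : UnitAddCircle, fourier (-k) t * F t ∂haarAddCircle := by
          rw [integral_const_mul]
      _ = conj (fourier k c) * fourierCoeff F k := by
          rw [← fourier_neg, ← hfourier_def]
  have hGcoeff : ∀ n k, fourierCoeff (fun y : UnitAddCircle => ((g n y : ℝ) : ℂ)) k
      = fourierCoeff F k * conj (S n k) := by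
    intro n k
    rw [hfourier_def]
    have h0 : ∀ t : UnitAddCircle, ((g n t : ℝ) : ℂ) = ∑ j ∈ Finset.Icc 1 n, F (t - x j) := by
      intro t; simp only [hg, hF]; push_cast; rfl
    have h0' : ∀ t : UnitAddCircle, fourier (-k) t * ((g n t : ℝ) : ℂ)
        = ∑ j ∈ Finset.Icc 1 n, fourier (-k) t * F (t - x j) := by
      intro t; rw [h0, Finset.mul_sum]
    simp_rw [h0']
    rw [integral_finset_sum _ (fun j _ => ?_)]
    · rw [Finset.sum_congr rfl fun j _ => htrans k (x j), ← Finset.sum_mul]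
      rw [hS, mul_comm]
      congr 1
      simp only [map_sum]
    · apply Continuous.integrable_of_hasCompactSupport
      · exact (fourier (-k)).continuous.mul (hFc.comp (continuous_id.sub continuous_const))
      · exact HasCompactSupport.of_compactSpace _
  have hcoefbd : ∀ n k, ar k * ‖S n k‖ ≤ ∫ y : UnitAddCircle, |g n y| := by
    intro n k
    have h1 : ar k * ‖S n k‖ = ‖fourierCoeff (fun y : UnitAddCircle => ((g n y : ℝ) : ℂ)) k‖ := by
      rw [hGcoeff n k, norm_mul, hnorm, RCLike.norm_conj]
    rw [h1, hfourier_def]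
    calc ‖∫ t : UnitAddCircle, fourier (-k) t * ((g n t : ℝ) : ℂ) ∂haarAddCircle‖
        ≤ ∫ t : UnitAddCircle, ‖fourier (-k) t * ((g n t : ℝ) : ℂ)‖ ∂haarAddCircle :=
          norm_integral_le_integral_norm _
      _ = ∫ t : UnitAddCircle, |g n t| ∂haarAddCircle := by
          congr 1; funext t
          rw [norm_mul, Complex.norm_real, Real.norm_eq_abs]
          simp [fourier_apply, Circle.norm_coe]
      _ = ∫ y : UnitAddCircle, |g n y| := by rw [← hvol]
  -- final constant
  set K : ℝ := T M + f 0 with hKdef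
  have hKnn : 0 ≤ K := by rw [hKdef]; linarith [hT0 M]
  have hc₂ : 0 < c₂ := lt_of_lt_of_le hc₁ hc₁₂
  set Cc : ℝ := 10 * B + K / 2 + c₂ + 1 with hCc
  have hCcpos : 0 < Cc := by rw [hCc]; linarith
  refine ⟨Cc, hCcpos, ?_⟩
  rw [frequently_atTop]
  intro N
  obtain ⟨n, hnN, hnM, hngood⟩ := hfreq N
  refine ⟨n, hnN, ?_⟩
  intro y
  -- basic quantities
  set t : ℝ := (n:ℝ) with ht
  have ht1 : (1:ℝ) ≤ t := by
    rw [ht]; exact_mod_cast le_trans hM hnM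
  have ht0 : (0:ℝ) < t := lt_of_lt_of_le zero_lt_one ht1
  set t3 : ℝ := t ^ ((1:ℝ)/3) with ht3
  set t23 : ℝ := t ^ ((2:ℝ)/3) with ht23
  have ht3pos : 0 < t3 := Real.rpow_pos_of_pos ht0 _
  have ht23pos : 0 < t23 := Real.rpow_pos_of_pos ht0 _
  have ht31 : 1 ≤ t3 := Real.one_le_rpow ht1 (by norm_num)
  have hmul : t3 * t23 = t := by
    rw [ht3, ht23, ← Real.rpow_add ht0]
    norm_num
  have hmul2 : t3 * t3 = t23 := by
    rw [ht3, ht23, ← Real.rpow_add ht0]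
    norm_num
  set H : ℕ := ⌈t3⌉₊ with hH
  have hH1 : 1 ≤ H := Nat.one_le_ceil_iff.mpr ht3pos
  have hHge : t3 ≤ (H:ℝ) := Nat.le_ceil _
  have hHle : (H:ℝ) ≤ t3 + 1 := (Nat.ceil_lt_add_one ht3pos.le).le
  have hHpos : (0:ℝ) < H := lt_of_lt_of_le ht3pos hHge
  set s : Finset ℤ := Finset.Icc (-(H:ℤ)) (H:ℤ) with hs
  -- the good-point properties
  have hlow : ∀ z, -B ≤ g n z := fun z => le_trans hngood (hmin n hnM z)
  have habs : (∫ z : UnitAddCircle, |g n z|) ≤ 2 * B := by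
    have hpt : ∀ z : UnitAddCircle, |g n z| ≤ g n z + 2 * B := by
      intro z
      rcases abs_cases (g n z) with ⟨h1, _⟩ | ⟨h1, _⟩
      · linarith [hBpos]
      · linarith [hlow z]
    have h2 : (∫ z : UnitAddCircle, |g n z|) ≤ ∫ z : UnitAddCircle, (g n z + 2 * B) :=
      integral_mono (hgint n).abs ((hgint n).add (integrable_const _)) hpt
    rw [integral_add (hgint n) (integrable_const _), hint n, integral_const] at h2
    simpa using h2
  have hu2B : ∀ k, ar k * ‖S n k‖ ≤ 2 * B := fun k => (hcoefbd n k).trans habs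
  -- the series bound
  set u : ℤ → ℝ := fun k => ar k * ‖S n k‖ with hu
  have hunn : ∀ k, 0 ≤ u k := fun k => mul_nonneg (harnn k) (norm_nonneg _)
  have husum : Summable u := by
    apply Summable.of_nonneg_of_le hunn (fun k => ?_) (harsum.mul_right t)
    calc u k ≤ ar k * t := by
          apply mul_le_mul_of_nonneg_left _ (harnn k)
          rw [ht]; exact hSbd n k
      _ = ar k * t := rfl
  have hmain : |g n y| ≤ ∑' k, u k := by
    have h1 := hgS n y
    have hnf : (fun k : ℤ => ‖fourierCoeff F k * fourier k y * conj (S n k)‖) = u := by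
      funext k
      rw [norm_mul, norm_mul, hnorm, RCLike.norm_conj, hu]
      have : ‖(fourier k y : ℂ)‖ = 1 := by simp [fourier_apply, Circle.norm_coe]
      rw [this, mul_one]
    have h2 : |g n y| = ‖((g n y : ℝ) : ℂ)‖ := by
      rw [Complex.norm_real, Real.norm_eq_abs]
    rw [h2, ← h1.tsum_eq]
    calc ‖∑' k, fourierCoeff F k * fourier k y * conj (S n k)‖
        ≤ ∑' k, ‖fourierCoeff F k * fourier k y * conj (S n k)‖ :=
          norm_tsum_le_tsum_norm (by rw [hnf]; exact husum)
      _ = ∑' k, u k := by rw [hnf]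
  -- split the series
  set p : ℤ → ℝ := fun k => if k ∈ s then u k else 0 with hp
  set q : ℤ → ℝ := fun k => if k ∈ s then 0 else u k with hq
  have hpsum : Summable p := by
    apply Summable.of_nonneg_of_le (fun k => ?_) (fun k => ?_) husum
    · rw [hp]; dsimp only; split
      · exact hunn k
      · exact le_refl 0
    · rw [hp]; dsimp only; split
      · exact le_refl _
      · exact hunn k
  have hqsum : Summable q := by
    apply Summable.of_nonneg_of_le (fun k => ?_) (fun k => ?_) husum
    · rw [hq]; dsimp only; split
      · exact le_refl 0
      · exact hunn k
    · rw [hq]; dsimp only; split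
      · exact hunn k
      · exact le_refl _
  have hsplit : ∑' k, u k = (∑' k, p k) + ∑' k, q k := by
    rw [← Summable.tsum_add hpsum hqsum]
    congr 1; funext k
    rw [hp, hq]; dsimp only; split <;> simp
  -- part 1 : small frequencies
  have hcard : (s.card : ℝ) = 2 * (H:ℝ) + 1 := by
    rw [hs, Int.card_Icc]
    have : ((H:ℤ) + 1 - -(H:ℤ)).toNat = 2 * H + 1 := by omega
    rw [this]; push_cast; ring
  have hpart1 : (∑' k, p k) ≤ 10 * B * t3 := by
    have he : ∀ k ∉ s, p k = 0 := by
      intro k hk; rw [hp]; dsimp only; rw [if_neg hk]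
    rw [tsum_eq_sum he]
    calc ∑ k ∈ s, p k ≤ ∑ k ∈ s, 2 * B := by
          apply Finset.sum_le_sum
          intro k hk
          rw [hp]; dsimp only; rw [if_pos hk]
          exact hu2B k
      _ = s.card * (2 * B) := by rw [Finset.sum_const, nsmul_eq_mul]
      _ = (2 * (H:ℝ) + 1) * (2 * B) := by rw [hcard]
      _ ≤ (5 * t3) * (2 * B) := by
          apply mul_le_mul_of_nonneg_right _ (by linarith)
          linarith
      _ = 10 * B * t3 := by ring
  -- part 2 : large frequencies
  set qa : ℤ → ℝ := fun k => 1/(2*t23) * (ar k * ‖S n k‖^2) with hqa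
  set qb : ℤ → ℝ := fun k => if k ∈ s then 0 else t23/2 * ar k with hqb
  have hqasum : Summable qa := (hTsum n).summable.mul_left _
  have hqbsum : Summable qb := by
    apply Summable.of_nonneg_of_le (fun k => ?_) (fun k => ?_) (harsum.mul_left (t23/2))
    · rw [hqb]; dsimp only; split
      · exact le_refl 0
      · exact mul_nonneg (by positivity) (harnn k)
    · rw [hqb]; dsimp only; split
      · exact mul_nonneg (by positivity) (harnn k)
      · exact le_refl _
  have hqbound : ∀ k, q k ≤ qa k + qb k := by
    intro k
    rw [hq, hqa, hqb]; dsimp only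
    by_cases hk : k ∈ s
    · rw [if_pos hk, if_pos hk]
      have : 0 ≤ 1/(2*t23) * (ar k * ‖S n k‖^2) :=
        mul_nonneg (by positivity) (mul_nonneg (harnn k) (by positivity))
      linarith
    · rw [if_neg hk, if_neg hk]
      have h3 : 1/(2*t23) * (ar k * ‖S n k‖^2) + t23/2 * ar k
          = (ar k * ‖S n k‖^2 + t23^2 * ar k)/(2*t23) := by
        field_simp
      rw [hu]; dsimp only
      rw [h3, le_div_iff₀ (by positivity)]
      nlinarith [mul_nonneg (harnn k) (sq_nonneg (‖S n k‖ - t23))]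
  have hqale : (∑' k, qa k) ≤ K/2 * t3 := by
    have h1 : (∑' k, qa k) = 1/(2*t23) * T n := by
      rw [hqa, tsum_mul_left, (hTsum n).tsum_eq]
    rw [h1]
    have h2 : T n ≤ K * t := by rw [ht]; exact hK n hnM
    calc 1/(2*t23) * T n ≤ 1/(2*t23) * (K * t) :=
          mul_le_mul_of_nonneg_left h2 (by positivity)
      _ = K/2 * t3 := by
          rw [← hmul]; field_simp
  have hqble : (∑' k, qb k) ≤ c₂ * t3 := by
    set w : ℤ → ℝ := fun k => if k ∈ s then (0:ℝ) else 1/(k:ℝ)^2 with hw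
    have hwnn : ∀ k, 0 ≤ w k := by
      intro k; rw [hw]; dsimp only; split
      · exact le_refl 0
      · positivity
    have hwsum : Summable w := by
      apply Summable.of_nonneg_of_le hwnn (fun k => ?_) hsq1
      rw [hw]; dsimp only; split
      · positivity
      · exact le_refl _
    have hwtail : (∑' k, w k) ≤ 2 / H := by
      have := int_tail H hH1
      rw [hw, hs]
      exact this
    have hqbw : ∀ k, qb k ≤ (t23/2 * c₂) * w k := by
      intro k
      rw [hqb, hw]; dsimp only
      by_cases hk : k ∈ s
      · rw [if_pos hk, if_pos hk]; simp
      · rw [if_neg hk, if_neg hk]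
        have hk0 : k ≠ 0 := by
          intro h0
          apply hk
          rw [h0, hs]
          simp only [Finset.mem_Icc]
          omega
        have := harub k
        calc t23/2 * ar k ≤ t23/2 * (c₂ / (k:ℝ)^2) :=
              mul_le_mul_of_nonneg_left (harub k) (by positivity)
          _ = t23/2 * c₂ * (1/(k:ℝ)^2) := by ring
    calc (∑' k, qb k) ≤ ∑' k, (t23/2 * c₂) * w k :=
          Summable.tsum_le_tsum hqbw hqbsum (hwsum.mul_left _)
      _ = (t23/2 * c₂) * ∑' k, w k := tsum_mul_left
      _ ≤ (t23/2 * c₂) * (2/H) :=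
          mul_le_mul_of_nonneg_left hwtail (by positivity)
      _ = c₂ * (t23 / H) := by ring
      _ ≤ c₂ * (t23 / t3) := by
          apply mul_le_mul_of_nonneg_left _ (le_of_lt hc₂)
          apply div_le_div_of_nonneg_left (le_of_lt ht23pos) ht3pos hHge
      _ = c₂ * t3 := by
          rw [← hmul2]
          field_simp
  -- conclusion
  have hqle : (∑' k, q k) ≤ K/2 * t3 + c₂ * t3 := by
    calc (∑' k, q k) ≤ ∑' k, (qa k + qb k) :=
          Summable.tsum_le_tsum hqbound hqsum (hqasum.add hqbsum)
      _ = (∑' k, qa k) + ∑' k, qb k := Summable.tsum_add hqasum hqbsum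
      _ ≤ K/2 * t3 + c₂ * t3 := add_le_add hqale hqble
  show |g n y| ≤ Cc * t3
  calc |g n y| ≤ ∑' k, u k := hmain
    _ = (∑' k, p k) + ∑' k, q k := hsplit
    _ ≤ 10 * B * t3 + (K/2 * t3 + c₂ * t3) := add_le_add hpart1 hqle
    _ = (10 * B + K/2 + c₂) * t3 := by ring
    _ ≤ Cc * t3 := by
        apply mul_le_mul_of_nonneg_right _ (le_of_lt ht3pos)
        rw [hCc]; linarith
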